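/- arXiv:1306.4088 — 2 statements merged into one kernel-verified Lean document; each statement's English description precedes it below -/
import Mathlib

section
/- Let R be a ring and M a left R-module. If M is pure injective, then the canonical evaluation homomorphism σ_M : M → M^{++} into its double character module is a split monomorphism. -/
universe u

/-! Common definitions: character modules, purity, pure injectivity. -/

open MulOpposite


/-- The character group `M⁺ = Hom_ℤ(M, ℚ/ℤ)`. -/
def CharMod (M : Type u) [AddCommGroup M] : Type u := M →+ AddCircle (1 : ℚ)

instance (M : Type u) [AddCommGroup M] : AddCommGroup (CharMod M) :=
  inferInstanceAs (AddCommGroup (M →+ AddCircle (1 : ℚ)))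

instance (M : Type u) [AddCommGroup M] : FunLike (CharMod M) M (AddCircle (1 : ℚ)) :=
  inferInstanceAs (FunLike (M →+ AddCircle (1 : ℚ)) M (AddCircle (1 : ℚ)))

instance (M : Type u) [AddCommGroup M] :
    AddMonoidHomClass (CharMod M) M (AddCircle (1 : ℚ)) :=
  inferInstanceAs (AddMonoidHomClass (M →+ AddCircle (1 : ℚ)) M (AddCircle (1 : ℚ)))

/-- If `M` is a left `R`-module, `M⁺` is a right `R`-module via `(c • r) m = c (r • m)`. -/
instance CharMod.moduleOp (R : Type v) [Ring R] (M : Type u) [AddCommGroup M] [Module R M] :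
    Module Rᵐᵒᵖ (CharMod M) where
  smul r c := (c : M →+ AddCircle (1 : ℚ)).comp (DistribMulAction.toAddMonoidHom M r.unop)
  one_smul c := AddMonoidHom.ext fun m => congrArg c (one_smul R m)
  mul_smul r s c := AddMonoidHom.ext fun m => congrArg c (mul_smul s.unop r.unop m)
  smul_zero r := rfl
  smul_add r c d := rfl
  add_smul r s c := AddMonoidHom.ext fun m => by
    show c ((r.unop + s.unop) • m) = c (r.unop • m) + c (s.unop • m)
    rw [add_smul, map_add]
  zero_smul c := AddMonoidHom.ext fun m => by
    show c ((0 : R) • m) = 0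
    rw [zero_smul, map_zero]

@[simp] lemma CharMod.op_smul_apply {R : Type v} [Ring R] {M : Type u} [AddCommGroup M]
    [Module R M] (r : Rᵐᵒᵖ) (c : CharMod M) (m : M) : (r • c) m = c (r.unop • m) := rfl

/-- If `N` is a right `R`-module, `N⁺` is a left `R`-module via `(r • c) n = c (n • r)`. -/
instance CharMod.moduleUnop (R : Type v) [Ring R] (N : Type u) [AddCommGroup N] [Module Rᵐᵒᵖ N] :
    Module R (CharMod N) where
  smul r c := (c : N →+ AddCircle (1 : ℚ)).comp (DistribMulAction.toAddMonoidHom N (op r))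
  one_smul c := AddMonoidHom.ext fun n => congrArg c (one_smul Rᵐᵒᵖ n)
  mul_smul r s c := AddMonoidHom.ext fun n => by
    show c ((op (r * s)) • n) = c (op s • op r • n)
    rw [← mul_smul]; rfl
  smul_zero r := rfl
  smul_add r c d := rfl
  add_smul r s c := AddMonoidHom.ext fun n => by
    show c ((op (r + s)) • n) = c (op r • n) + c (op s • n)
    rw [show op (r + s) = op r + op s from rfl, add_smul, map_add]
  zero_smul c := AddMonoidHom.ext fun n => by
    show c ((op (0 : R)) • n) = 0
    rw [show op (0 : R) = (0 : Rᵐᵒᵖ) from rfl, zero_smul, map_zero]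

@[simp] lemma CharMod.unop_smul_apply {R : Type v} [Ring R] {N : Type u} [AddCommGroup N]
    [Module Rᵐᵒᵖ N] (r : R) (c : CharMod N) (n : N) : (r • c) n = c (op r • n) := rfl

/-- The dual `f⁺ : C⁺ → A⁺` of a map `f : A → C` of left `R`-modules. -/
def charDual {R : Type v} [Ring R] {A C : Type u} [AddCommGroup A] [Module R A]
    [AddCommGroup C] [Module R C] (f : A →ₗ[R] C) : CharMod C →ₗ[Rᵐᵒᵖ] CharMod A where
  toFun c := (c : C →+ AddCircle (1 : ℚ)).comp f.toAddMonoidHom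
  map_add' _ _ := rfl
  map_smul' r c := AddMonoidHom.ext fun a => (congrArg c (f.map_smul r.unop a)).symm

/-- The canonical evaluation map `σ_M : M → M⁺⁺`. -/
def charEval (R : Type v) [Ring R] (M : Type u) [AddCommGroup M] [Module R M] :
    M →ₗ[R] CharMod (CharMod M) where
  toFun m :=
    { toFun := fun c => c m
      map_zero' := rfl
      map_add' := fun _ _ => rfl }
  map_add' m m' := AddMonoidHom.ext fun c => c.map_add m m'
  map_smul' r m := AddMonoidHom.ext fun c => rfl

/-- A linear map `i : M → N` is a pure monomorphism if it is injective and every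
map from a finitely presented module to `N ⧸ im i` lifts to `N`, i.e. the short exact
sequence `0 → M → N → N ⧸ im i → 0` remains exact after applying `Hom(F, -)` for all
finitely presented `F`. -/
def IsPureMono {R : Type v} [Ring R] {M N : Type u} [AddCommGroup M] [Module R M]
    [AddCommGroup N] [Module R N] (i : M →ₗ[R] N) : Prop :=
  Function.Injective i ∧
    ∀ (F : Type u) [AddCommGroup F] [Module R F], Module.FinitePresentation R F →
      ∀ g : F →ₗ[R] (N ⧸ LinearMap.range i),
        ∃ h : F →ₗ[R] N, (LinearMap.range i).mkQ.comp h = g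

/-- A module `E` is pure injective if every map to `E` extends along pure monomorphisms. -/
def IsPureInjective (R : Type v) [Ring R] (E : Type u) [AddCommGroup E] [Module R E] : Prop :=
  ∀ (M N : Type u) [AddCommGroup M] [Module R M] [AddCommGroup N] [Module R N]
    (i : M →ₗ[R] N), IsPureMono i →
      ∀ f : M →ₗ[R] E, ∃ g : N →ₗ[R] E, g.comp i = f

/-! ### Auxiliary lemmas -/

section Aux

variable {R : Type u} [Ring R] {M : Type u} [AddCommGroup M] [Module R M]

/-- Evaluation at a point, as an additive hom on the character module. -/
private def CharMod.evalHom {N : Type u} [AddCommGroup N] (x : N) :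
    CharMod N →+ AddCircle (1 : ℚ) where
  toFun c := c x
  map_zero' := rfl
  map_add' _ _ := rfl

private lemma CharMod.sum_apply {N : Type u} [AddCommGroup N] {ι : Type*} (s : Finset ι)
    (c : ι → CharMod N) (x : N) : (∑ t ∈ s, c t) x = ∑ t ∈ s, c t x :=
  map_sum (CharMod.evalHom x) c s

private lemma charEval_injective (R : Type u) [Ring R] (M : Type u) [AddCommGroup M]
    [Module R M] : Function.Injective (charEval R M) := by
  intro a b h
  rw [← sub_eq_zero]
  apply CharacterModule.eq_zero_of_character_apply
  intro c
  have hc := DFunLike.congr_fun h (c : CharMod M)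
  show c (a - b) = 0
  rw [map_sub, sub_eq_zero]
  exact hc

/-- Solvability of finite systems of linear equations transfers from the double character
module back to `M`. -/
private lemma solve_equations {n : ℕ} {ι : Type u} [Fintype ι]
    (k : ι → Fin n → R) (m : ι → M) (y : Fin n → CharMod (CharMod M))
    (hy : ∀ t, (∑ j, k t j • y j) = charEval R M (m t)) :
    ∃ x : Fin n → M, ∀ t, (∑ j, k t j • x j) = m t := by
  classical
  let φ : (Fin n → M) →+ (ι → M) :=
    { toFun := fun x t => ∑ j, k t j • x j
      map_zero' := by funext t; simp
      map_add' := fun x x' => by funext t; simp [smul_add, Finset.sum_add_distrib] }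
  by_cases hex : ∃ x, φ x = m
  · obtain ⟨x, hx⟩ := hex
    exact ⟨x, fun t => congrFun hx t⟩
  exfalso
  have hm : QuotientAddGroup.mk' φ.range m ≠ 0 := by
    intro h
    rw [QuotientAddGroup.mk'_apply, QuotientAddGroup.eq_zero_iff] at h
    exact hex h
  obtain ⟨χ', hχ'⟩ := CharacterModule.exists_character_apply_ne_zero_of_ne_zero hm
  let χ : (ι → M) →+ AddCircle (1 : ℚ) :=
    (χ' : ((ι → M) ⧸ φ.range) →+ AddCircle (1 : ℚ)).comp (QuotientAddGroup.mk' φ.range)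
  have hχT : ∀ x : Fin n → M, χ (φ x) = 0 := by
    intro x
    show χ' (QuotientAddGroup.mk' φ.range (φ x)) = 0
    rw [show QuotientAddGroup.mk' φ.range (φ x) = 0 by
      rw [QuotientAddGroup.mk'_apply, QuotientAddGroup.eq_zero_iff]; exact ⟨x, rfl⟩]
    exact map_zero _
  have hχm : χ m ≠ 0 := hχ'
  let χt : ι → CharMod M := fun t => χ.comp (AddMonoidHom.single (fun _ : ι => M) t)
  have hsum : ∀ p : ι → M, ∑ t, χt t (p t) = χ p := by
    intro p
    have : ∑ t, χ (Pi.single t (p t)) = χ (∑ t, Pi.single t (p t)) := (map_sum χ _ _).symm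
    simp [Finset.univ_sum_single] at this; exact this
  have hkey : ∀ j, (∑ t, (op (k t j) • χt t) : CharMod M) = 0 := by
    intro j
    refine AddMonoidHom.ext fun x => ?_
    have h1 : (∑ t, (op (k t j) • χt t) : CharMod M) x = ∑ t, χt t (k t j • x) := by
      rw [CharMod.sum_apply]
      exact Finset.sum_congr rfl fun t _ => CharMod.op_smul_apply (op (k t j)) (χt t) x
    have h2 : φ (Pi.single j x) = fun t => k t j • x := by
      funext t
      show (∑ j', k t j' • Pi.single j x j') = k t j • x
      rw [Finset.sum_eq_single_of_mem j (Finset.mem_univ j)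
        (fun j' _ hj' => by rw [Pi.single_eq_of_ne hj', smul_zero])]
      rw [Pi.single_eq_same]
    show (∑ t, (op (k t j) • χt t) : CharMod M) x = 0
    rw [h1, hsum (fun t => k t j • x), ← h2, hχT]
  have hzero : ∀ j, (0 : AddCircle (1 : ℚ)) = ∑ t, (k t j • y j) (χt t) := by
    intro j
    calc (0 : AddCircle (1 : ℚ)) = y j 0 := (map_zero (y j)).symm
      _ = y j (∑ t, op (k t j) • χt t) := by rw [hkey j]
      _ = ∑ t, y j (op (k t j) • χt t) := map_sum (y j) _ _
      _ = ∑ t, (k t j • y j) (χt t) := rfl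
  have final : χ m = 0 := by
    calc χ m = ∑ t, χt t (m t) := (hsum m).symm
      _ = ∑ t, (charEval R M (m t)) (χt t) := rfl
      _ = ∑ t, (∑ j, k t j • y j) (χt t) := by simp_rw [hy]
      _ = ∑ t, ∑ j, (k t j • y j) (χt t) := by simp_rw [CharMod.sum_apply]
      _ = ∑ j, ∑ t, (k t j • y j) (χt t) := Finset.sum_comm
      _ = 0 := Finset.sum_eq_zero fun j _ => (hzero j).symm
  exact hχm final

/-- The evaluation map `σ_M : M → M⁺⁺` is a pure monomorphism. -/
private lemma charEval_isPureMono (R : Type u) [Ring R] (M : Type u) [AddCommGroup M]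
    [Module R M] : IsPureMono (charEval R M) := by
  classical
  refine ⟨charEval_injective R M, ?_⟩
  intro F _ _ hFP g
  haveI := hFP
  obtain ⟨n, π, hπ⟩ := Module.Finite.exists_fin' R F
  obtain ⟨S, hS⟩ := Module.FinitePresentation.fg_ker (N := F) π hπ
  obtain ⟨H, hH⟩ := Module.projective_lifting_property
    (LinearMap.range (charEval R M)).mkQ (g ∘ₗ π) (Submodule.mkQ_surjective _)
  have hmem : ∀ t : S, H (t : Fin n → R) ∈ LinearMap.range (charEval R M) := by
    intro t
    have ht : (t : Fin n → R) ∈ LinearMap.ker π := by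
      rw [← hS]; exact Submodule.subset_span t.2
    have h1 := DFunLike.congr_fun hH (t : Fin n → R)
    rw [LinearMap.comp_apply, LinearMap.comp_apply, LinearMap.mem_ker.mp ht, map_zero] at h1
    rwa [Submodule.mkQ_apply, Submodule.Quotient.mk_eq_zero] at h1
  choose mvec hmvec using hmem
  have hrep : ∀ c : Fin n → R, c = ∑ j, c j • (Pi.single j 1 : Fin n → R) := by
    intro c
    funext j'
    rw [Finset.sum_apply]
    simp [Pi.single_apply]
  have hy : ∀ t : S,
      (∑ j, (t : Fin n → R) j • H ((Pi.single j 1 : Fin n → R))) = charEval R M (mvec t) := by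
    intro t
    rw [hmvec t]
    calc ∑ j, (t : Fin n → R) j • H ((Pi.single j 1 : Fin n → R))
        = ∑ j, H ((t : Fin n → R) j • (Pi.single j 1 : Fin n → R)) := by simp_rw [map_smul]
      _ = H (∑ j, (t : Fin n → R) j • (Pi.single j 1 : Fin n → R)) := (map_sum H _ _).symm
      _ = H t := by rw [← hrep (t : Fin n → R)]
  obtain ⟨x, hx⟩ := solve_equations (fun t : S => (t : Fin n → R)) mvec
    (fun j => H ((Pi.single j 1 : Fin n → R))) hy
  let u : (Fin n → R) →ₗ[R] M :=
    { toFun := fun c => ∑ j, c j • x j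
      map_add' := fun c d => by simp [add_smul, Finset.sum_add_distrib]
      map_smul' := fun r c => by simp [mul_smul, Finset.smul_sum] }
  let h' : (Fin n → R) →ₗ[R] CharMod (CharMod M) := H - (charEval R M) ∘ₗ u
  have hker' : LinearMap.ker π ≤ LinearMap.ker h' := by
    rw [← hS, Submodule.span_le]
    intro c hc
    simp only [SetLike.mem_coe, LinearMap.mem_ker]
    show H c - charEval R M (u c) = 0
    have h1 : u c = mvec ⟨c, hc⟩ := hx ⟨c, hc⟩
    rw [h1, hmvec ⟨c, hc⟩, sub_self]
  let e := LinearMap.quotKerEquivOfSurjective π hπ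
  refine ⟨(Submodule.liftQ _ h' hker') ∘ₗ (e.symm : F →ₗ[R] _), ?_⟩
  refine (LinearMap.cancel_right hπ).mp (LinearMap.ext fun c => ?_)
  have he : e.symm (π c) = Submodule.Quotient.mk c := by
    rw [LinearEquiv.symm_apply_eq]; rfl
  show (LinearMap.range (charEval R M)).mkQ
      ((Submodule.liftQ _ h' hker') (e.symm (π c))) = g (π c)
  rw [he, Submodule.liftQ_apply]
  show (LinearMap.range (charEval R M)).mkQ (H c - charEval R M (u c)) = g (π c)
  rw [map_sub]
  have h2 : (LinearMap.range (charEval R M)).mkQ (charEval R M (u c)) = 0 := by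
    rw [Submodule.mkQ_apply, Submodule.Quotient.mk_eq_zero]
    exact ⟨u c, rfl⟩
  rw [h2, sub_zero]
  exact DFunLike.congr_fun hH c

end Aux

/-- If `M` is a pure injective left `R`-module, then the canonical evaluation map
`σ_M : M → M⁺⁺` is a split monomorphism. -/
theorem stmt2 {R : Type u} [Ring R] {M : Type u} [AddCommGroup M] [Module R M]
    (hM : IsPureInjective R M) :
    ∃ α : CharMod (CharMod M) →ₗ[R] M, α.comp (charEval R M) = LinearMap.id := by
  obtain ⟨α, hα⟩ := hM M (CharMod (CharMod M)) (charEval R M) (charEval_isPureMono R M)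
    LinearMap.id
  exact ⟨α, hα⟩
end

section
/- Let R be a ring such that every left R-module is pure injective (i.e., R is left pure semisimple). Let C be a class of left R-modules and D a class of right R-modules such that X^+ ∈ D for all X ∈ C. If f : A → C is a homomorphism of left R-modules with C ∈ C and f^+ : C^+ → A^+ is a D-precover of A^+, then f is a C-preenvelope of A. -/
universe u

/-! Common definitions: character modules, purity, pure injectivity. -/

open MulOpposite


section Aux

open Finset

variable {R : Type u} [Ring R]

/-- Dual of a map of right `R`-modules. -/
def charDualOp {Y Z : Type u} [AddCommGroup Y] [Module Rᵐᵒᵖ Y]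
    [AddCommGroup Z] [Module Rᵐᵒᵖ Z] (u : Y →ₗ[Rᵐᵒᵖ] Z) : CharMod Z →ₗ[R] CharMod Y where
  toFun c := (c : Z →+ AddCircle (1 : ℚ)).comp u.toAddMonoidHom
  map_add' _ _ := rfl
  map_smul' r c := AddMonoidHom.ext fun y => (congrArg c (u.map_smul (op r) y)).symm

@[simp] lemma charDualOp_apply {Y Z : Type u} [AddCommGroup Y] [Module Rᵐᵒᵖ Y]
    [AddCommGroup Z] [Module Rᵐᵒᵖ Z] (u : Y →ₗ[Rᵐᵒᵖ] Z) (c : CharMod Z) (y : Y) :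
    charDualOp u c y = c (u y) := rfl

@[simp] lemma charDual_apply {A C : Type u} [AddCommGroup A] [Module R A]
    [AddCommGroup C] [Module R C] (f : A →ₗ[R] C) (c : CharMod C) (a : A) :
    charDual f c a = c (f a) := rfl

@[simp] lemma charEval_apply {M : Type u} [AddCommGroup M] [Module R M] (m : M)
    (c : CharMod M) : charEval R M m c = c m := rfl

private lemma charSum {M : Type u} [AddCommGroup M] {ι : Type*} (t : Finset ι)
    (c : ι → CharMod M) (m : M) : (∑ i ∈ t, c i) m = ∑ i ∈ t, c i m :=
  AddMonoidHom.finset_sum_apply (fun i => show M →+ AddCircle (1 : ℚ) from c i) t m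

/-- Finite systems of linear equations solvable in `M⁺⁺` are solvable in `M`. -/
private lemma solvable_transfer {M : Type u} [AddCommGroup M] [Module R M]
    {s n : ℕ} (r : Fin s → Fin n → R) (m : Fin s → M) (y : Fin n → CharMod (CharMod M))
    (hy : ∀ j, ∑ i, r j i • y i = charEval R M (m j)) :
    ∃ x : Fin n → M, ∀ j, ∑ i, r j i • x i = m j := by
  classical
  by_contra hx
  push_neg at hx
  let α : (Fin n → M) →ₗ[ℤ] (Fin s → M) :=
    { toFun := fun x j => ∑ i, r j i • x i
      map_add' := fun x x' => by
        funext j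
        simp [smul_add, Finset.sum_add_distrib]
      map_smul' := fun z x => by
        funext j
        simp only [RingHom.id_apply, Pi.smul_apply]
        rw [Finset.smul_sum]
        exact Finset.sum_congr rfl fun i _ => (smul_comm z (r j i) (x i)).symm }
  have hm : Submodule.Quotient.mk (p := LinearMap.range α) m ≠ 0 := by
    intro h
    rw [Submodule.Quotient.mk_eq_zero] at h
    obtain ⟨x, hx'⟩ := h
    obtain ⟨j, hj⟩ := hx x
    exact hj (congrFun hx' j)
  obtain ⟨χ', hχ'⟩ := CharacterModule.exists_character_apply_ne_zero_of_ne_zero hm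
  let χ : (Fin s → M) →+ AddCircle (1 : ℚ) :=
    (show ((Fin s → M) ⧸ LinearMap.range α) →+ AddCircle (1 : ℚ) from χ').comp
      (LinearMap.range α).mkQ.toAddMonoidHom
  have hχα : ∀ x, χ (α x) = 0 := by
    intro x
    show χ' (Submodule.Quotient.mk (α x)) = 0
    rw [(Submodule.Quotient.mk_eq_zero _).mpr (LinearMap.mem_range_self α x)]
    exact map_zero χ'
  let χj : Fin s → CharMod M := fun j => χ.comp (AddMonoidHom.single (fun _ => M) j)
  have hχdecomp : ∀ v : Fin s → M, χ v = ∑ j, χj j (v j) := by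
    intro v
    conv_lhs => rw [← Finset.univ_sum_single v, map_sum]
    exact Finset.sum_congr rfl fun j _ => rfl
  have hkey : ∀ i, (∑ j, (op (r j i) • χj j : CharMod M)) = 0 := by
    intro i
    refine AddMonoidHom.ext fun x => ?_
    have h1 : (∑ j, (op (r j i) • χj j : CharMod M)) x
        = ∑ j, χj j (r j i • x) := by
      rw [charSum]
      rfl
    have h2 : α (Pi.single i x) = fun j => r j i • x := by
      funext j
      show (∑ i', r j i' • Pi.single i x i') = r j i • x
      rw [Finset.sum_eq_single i (fun i' _ hne => by
        rw [Pi.single_eq_of_ne hne, smul_zero]) (by simp)]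
      rw [Pi.single_eq_same]
    have := hχα (Pi.single i x)
    rw [h2, hχdecomp] at this
    show (∑ j, (op (r j i) • χj j : CharMod M)) x = (0 : AddCircle (1 : ℚ))
    rw [h1, this]
  have hfinal : χ m = 0 := by
    rw [hχdecomp]
    have : ∀ j, χj j (m j) = ∑ i, y i (op (r j i) • χj j) := by
      intro j
      have := congrArg (fun c : CharMod (CharMod M) => c (χj j)) (hy j)
      simp only [charEval_apply] at this
      rw [← this, charSum]
      exact Finset.sum_congr rfl fun i _ => rfl
    calc ∑ j, χj j (m j) = ∑ j, ∑ i, y i (op (r j i) • χj j) :=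
          Finset.sum_congr rfl fun j _ => this j
      _ = ∑ i, ∑ j, y i (op (r j i) • χj j) := Finset.sum_comm
      _ = ∑ i, y i (∑ j, (op (r j i) • χj j : CharMod M)) :=
          Finset.sum_congr rfl fun i _ => (map_sum (y i) _ _).symm
      _ = 0 := by
          rw [Finset.sum_congr rfl fun i _ => by rw [hkey i, map_zero]]
          exact Finset.sum_const_zero
  exact hχ' hfinal

/-- The evaluation map `σ_M : M → M⁺⁺` is a pure monomorphism. -/
lemma isPureMono_charEval (M : Type u) [AddCommGroup M] [Module R M] :
    IsPureMono (charEval R M) := by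
  classical
  constructor
  · intro a b hab
    rw [← sub_eq_zero]
    apply CharacterModule.eq_zero_of_character_apply
    intro c
    have : (show CharMod M from c) a = (show CharMod M from c) b :=
      congrArg (fun d : CharMod (CharMod M) => d (show CharMod M from c)) hab
    show c (a - b) = 0
    rw [map_sub]
    rw [show c a = c b from this]
    exact sub_self _
  · intro F _ _ hF g
    haveI := hF
    obtain ⟨n, π, hπ⟩ := Module.Finite.exists_fin' R F
    have hker : (LinearMap.ker π).FG := Module.FinitePresentation.fg_ker π hπ
    obtain ⟨s, k, hk⟩ := Submodule.fg_iff_exists_fin_generating_family.mp hker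
    set G := g.comp π with hG
    choose y hy using fun i =>
      Submodule.Quotient.mk_surjective (LinearMap.range (charEval R M))
        (G (Pi.single i (1 : R)))
    let b := Pi.basisFun R (Fin n)
    let Y : (Fin n → R) →ₗ[R] CharMod (CharMod M) := b.constr ℕ y
    have hYapp : ∀ v : Fin n → R, Y v = ∑ i, v i • y i := by
      intro v
      rw [Module.Basis.constr_apply_fintype]
      simp [b]
    have hYG : ∀ v, (LinearMap.range (charEval R M)).mkQ (Y v) = G v := by
      have : (LinearMap.range (charEval R M)).mkQ.comp Y = G := by
        refine b.ext fun i => ?_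
        show (LinearMap.range (charEval R M)).mkQ (Y (b i)) = G (b i)
        have hb : (b i : Fin n → R) = Pi.single i 1 := by
          simp [b, Pi.basisFun_apply]
        rw [hYapp, hb]
        rw [Finset.sum_eq_single i (fun i' _ hne => by
          rw [Pi.single_eq_of_ne hne, zero_smul]) (by simp)]
        rw [Pi.single_eq_same, one_smul]
        exact hy i
      intro v
      exact congrArg (fun h => h v) this
    have hrel : ∀ j, ∃ mj : M, charEval R M mj = Y (k j) := by
      intro j
      have hkj : k j ∈ LinearMap.ker π := by
        rw [← hk]
        exact Submodule.subset_span ⟨j, rfl⟩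
      have : (LinearMap.range (charEval R M)).mkQ (Y (k j)) = 0 := by
        rw [hYG, hG]
        show g (π (k j)) = 0
        rw [LinearMap.mem_ker.mp hkj, map_zero]
      have hmem : Y (k j) ∈ LinearMap.range (charEval R M) := by
        rwa [← Submodule.Quotient.mk_eq_zero]
      exact hmem
    choose mm hmm using hrel
    obtain ⟨x, hxx⟩ := solvable_transfer (fun j => k j) mm y
      (fun j => by rw [← hYapp, ← hmm j])
    let Z : (Fin n → R) →ₗ[R] CharMod (CharMod M) :=
      Y - (charEval R M).comp (b.constr ℕ x)
    have hZker : LinearMap.ker π ≤ LinearMap.ker Z := by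
      rw [← hk, Submodule.span_le]
      rintro v ⟨j, rfl⟩
      show Y (k j) - charEval R M (b.constr ℕ x (k j)) = 0
      have hc : b.constr ℕ x (k j) = ∑ i, k j i • x i := by
        rw [Module.Basis.constr_apply_fintype]
        simp [b]
      rw [hc, hxx j, ← hmm j, sub_self]
    let e := π.quotKerEquivOfSurjective hπ
    refine ⟨((LinearMap.ker π).liftQ Z hZker).comp e.symm.toLinearMap, ?_⟩
    refine LinearMap.ext fun w => ?_
    obtain ⟨v, rfl⟩ := hπ w
    have he : e.symm (π v) = Submodule.Quotient.mk v := by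
      rw [LinearEquiv.symm_apply_eq]
      rfl
    show (LinearMap.range (charEval R M)).mkQ
        ((LinearMap.ker π).liftQ Z hZker (e.symm (π v))) = g (π v)
    rw [he, Submodule.liftQ_apply]
    show (LinearMap.range (charEval R M)).mkQ
        (Y v - charEval R M (b.constr ℕ x v)) = g (π v)
    rw [map_sub, hYG]
    have h0 : (LinearMap.range (charEval R M)).mkQ (charEval R M (b.constr ℕ x v)) = 0 :=
      (Submodule.Quotient.mk_eq_zero _).mpr (LinearMap.mem_range_self _ _)
    rw [h0, sub_zero]
    rfl

end Aux

/-- **Corollary 3.4.** Let `R` be left pure semisimple (every left `R`-module is pure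
injective), `𝒞` a class of left `R`-modules and `𝒟` a class of right `R`-modules with
`𝒞⁺ ⊆ 𝒟`. If `f⁺ : C⁺ → A⁺` is a `𝒟`-precover of `A⁺` with `C ∈ 𝒞`, then `f` is a
`𝒞`-preenvelope of `A`. -/
theorem stmt5 {R : Type u} [Ring R]
    (hpss : ∀ (X : Type u) [AddCommGroup X] [Module R X], IsPureInjective R X)
    {A C : Type u} [AddCommGroup A] [Module R A] [AddCommGroup C] [Module R C]
    (𝒞 : ∀ (X : Type u) [AddCommGroup X] [Module R X], Prop)
    (𝒟 : ∀ (Y : Type u) [AddCommGroup Y] [Module Rᵐᵒᵖ Y], Prop)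
    (hCD : ∀ (X : Type u) [AddCommGroup X] [Module R X], 𝒞 X → 𝒟 (CharMod X))
    (hC : 𝒞 C) (f : A →ₗ[R] C)
    (hdom : 𝒟 (CharMod C))
    (hfact : ∀ (Y : Type u) [AddCommGroup Y] [Module Rᵐᵒᵖ Y], 𝒟 Y →
      ∀ g : Y →ₗ[Rᵐᵒᵖ] CharMod A, ∃ h : Y →ₗ[Rᵐᵒᵖ] CharMod C, (charDual f).comp h = g) :
    ∀ (X : Type u) [AddCommGroup X] [Module R X], 𝒞 X →
      ∀ g : A →ₗ[R] X, ∃ h : C →ₗ[R] X, h.comp f = g := by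
  intro X _ _ hX g
  obtain ⟨h', hh'⟩ := hfact (CharMod X) (hCD X hX) (charDual g)
  obtain ⟨p, hp⟩ := hpss X X (CharMod (CharMod X)) (charEval R X)
    (isPureMono_charEval X) LinearMap.id
  refine ⟨(p.comp (charDualOp h')).comp (charEval R C), ?_⟩
  refine LinearMap.ext fun a => ?_
  show p (charDualOp h' (charEval R C (f a))) = g a
  have h1 : charDualOp h' (charEval R C (f a)) = charEval R X (g a) := by
    refine AddMonoidHom.ext fun c => ?_
    show charEval R C (f a) (h' c) = c (g a)
    show (h' c) (f a) = c (g a)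
    have := congrArg (fun u : CharMod X →ₗ[Rᵐᵒᵖ] CharMod A => u c a) hh'
    exact this
  rw [h1]
  exact congrArg (fun u : X →ₗ[R] X => u (g a)) hp
end
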